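/- Fix p, K ∈ [1,∞) and n ∈ ℕ. Suppose (X,d_X) is a p-barycentric metric space with constant K via a barycenter map B. Then for every symmetric stochastic matrix A = (a_{ij}) ∈ M_n(ℝ) with γ₊(A,d_X^p) < ∞ and every f ∈ L_p^n(X): d_{L_p^n(X)}((A⊗I_X^n)(f), B(f)) ≤ ((K^{2p}γ₊(A,d_X^p) − 1)/(K^{2p}γ₊(A,d_X^p) + K^p))^{1/p}·d_{L_p^n(X)}(f, B(f)). -/

import Mathlib

open scoped BigOperators ENNReal
open scoped Classical

noncomputable section

/-- A finitely supported probability measure on `X`. -/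
structure FinProb (X : Type*) where
  w : X →₀ ℝ
  nonneg : ∀ x, 0 ≤ w x
  total : w.sum (fun _ r => r) = 1

namespace FinProb

/-- The Dirac point mass at `x`. -/
def dirac {X : Type*} (x : X) : FinProb X where
  w := Finsupp.single x 1
  nonneg := fun y => by
    rw [Finsupp.single_apply]
    split <;> norm_num
  total := Finsupp.sum_single_index rfl

/-- The probability measure `∑ i, w i • δ_{Z i}` for nonnegative weights summing to 1. -/
def mix {ι X : Type*} [Fintype ι] (w : ι → ℝ) (Z : ι → X)
    (hw : ∀ i, 0 ≤ w i) (h1 : ∑ i, w i = 1) : FinProb X where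
  w := ∑ i, Finsupp.single (Z i) (w i)
  nonneg := fun x => by
    rw [Finset.sum_apply']
    refine Finset.sum_nonneg fun i _ => ?_
    rw [Finsupp.single_apply]
    split
    · exact hw i
    · exact le_rfl
  total := by
    rw [← Finsupp.sum_finset_sum_index (fun _ => rfl) (fun _ _ _ => rfl)]
    have h : ∀ i ∈ (Finset.univ : Finset ι),
        (Finsupp.single (Z i) (w i)).sum (fun _ r => r) = w i :=
      fun i _ => Finsupp.sum_single_index rfl
    rw [Finset.sum_congr rfl h]
    exact h1

/-- `mix` with normalization of the weights. -/
def mixN {ι X : Type*} [Fintype ι] (w : ι → ℝ) (Z : ι → X)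
    (hw : ∀ i, 0 ≤ w i) (hpos : 0 < ∑ i, w i) : FinProb X :=
  mix (fun i => w i / ∑ j, w j) Z
    (fun i => div_nonneg (hw i) hpos.le)
    (by rw [← Finset.sum_div, div_self (ne_of_gt hpos)])

/-- Integral of `f : X → ℝ` against `μ`. -/
def exp {X : Type*} (μ : FinProb X) (f : X → ℝ) : ℝ :=
  μ.w.sum fun x r => r * f x

end FinProb

/-- `π` is a coupling of `μ` and `ν`. -/
def IsCoupling {X : Type*} (π : FinProb (X × X)) (μ ν : FinProb X) : Prop :=
  (∀ x : X, (π.w.sum fun q r => if q.1 = x then r else 0) = μ.w x) ∧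
  (∀ y : X, (π.w.sum fun q r => if q.2 = y then r else 0) = ν.w y)

/-- The Wasserstein `p` distance between finitely supported probability measures. -/
def wassersteinDist {X : Type*} [MetricSpace X] (p : ℝ) (μ ν : FinProb X) : ℝ :=
  sInf {c : ℝ | ∃ π : FinProb (X × X), IsCoupling π μ ν ∧
    c = (π.exp fun q => dist q.1 q.2 ^ p) ^ p⁻¹}

/-- A barycenter map sends Dirac masses to their base points. -/
def IsBarycenterMap {X : Type*} (bary : FinProb X → X) : Prop :=
  ∀ x : X, bary (FinProb.dirac x) = x

/-- `X` is `W_p` barycentric with constant `Γ` via the barycenter map `bary`. -/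
def IsWBarycentric {X : Type*} [MetricSpace X] (p Γ : ℝ) (bary : FinProb X → X) : Prop :=
  IsBarycenterMap bary ∧
    ∀ μ ν : FinProb X, dist (bary μ) (bary ν) ≤ Γ * wassersteinDist p μ ν

/-- `X` is `p`-barycentric with constant `K` via the map `bary`. -/
def IsPBarycentric {X : Type*} [MetricSpace X] (p K : ℝ) (bary : FinProb X → X) : Prop :=
  ∀ (x : X) (μ : FinProb X),
    dist x (bary μ) ^ p + K ^ (-p) * (μ.exp fun y => dist (bary μ) y ^ p)
      ≤ μ.exp fun y => dist x y ^ p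

/-- A (possibly rectangular) matrix is stochastic if it has nonnegative entries and
each row sums to `1`. -/
def IsStochastic {n m : ℕ} (A : Matrix (Fin n) (Fin m) ℝ) : Prop :=
  (∀ i j, 0 ≤ A i j) ∧ ∀ i, ∑ j, A i j = 1

/-- `A` is reversible relative to the probability vector `π`. -/
def IsReversible {n : ℕ} (A : Matrix (Fin n) (Fin n) ℝ) (π : Fin n → ℝ) : Prop :=
  ∀ i j, π i * A i j = π j * A j i

/-- `π` is a probability vector. -/
def IsProbVec {n : ℕ} (π : Fin n → ℝ) : Prop :=
  (∀ i, 0 ≤ π i) ∧ ∑ i, π i = 1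

/-- The Cesàro average `𝒜_t(A) = (1/t) ∑_{s=1}^t A^s`. -/
def cesaro {n : ℕ} (A : Matrix (Fin n) (Fin n) ℝ) (t : ℕ) : Matrix (Fin n) (Fin n) ℝ :=
  (t : ℝ)⁻¹ • ∑ s ∈ Finset.Icc 1 t, A ^ s

/-- `X` has Markov type `p` with constant `M`. -/
def HasMarkovType (X : Type*) [MetricSpace X] (p M : ℝ) : Prop :=
  ∀ (n t : ℕ), 0 < n → 0 < t → ∀ (π : Fin n → ℝ) (A : Matrix (Fin n) (Fin n) ℝ),
    IsProbVec π → IsStochastic A → IsReversible A π → ∀ x : Fin n → X,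
      ∑ i, ∑ j, π i * (A ^ t) i j * dist (x i) (x j) ^ p ≤
        M ^ p * t * ∑ i, ∑ j, π i * A i j * dist (x i) (x j) ^ p

/-- `X` has metric Markov cotype `p` with constant `N`. -/
def HasMetricMarkovCotype (X : Type*) [MetricSpace X] (p N : ℝ) : Prop :=
  ∀ (n t : ℕ), 0 < n → 0 < t → ∀ (π : Fin n → ℝ) (A : Matrix (Fin n) (Fin n) ℝ),
    IsProbVec π → IsStochastic A → IsReversible A π → ∀ x : Fin n → X,
      ∃ y : Fin n → X,
        (∑ i, π i * dist (x i) (y i) ^ p) +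
          t * ∑ i, ∑ j, π i * A i j * dist (y i) (y j) ^ p ≤
        N ^ p * ∑ i, ∑ j, π i * cesaro A t i j * dist (x i) (x j) ^ p

/-- The Markov type `p` constant `M_p(X)`. -/
def markovTypeConst (X : Type*) [MetricSpace X] (p : ℝ) : ℝ :=
  sInf {M : ℝ | 0 < M ∧ HasMarkovType X p M}

/-- The metric Markov cotype `p` constant `N_p(X)`. -/
def markovCotypeConst (X : Type*) [MetricSpace X] (p : ℝ) : ℝ :=
  sInf {N : ℝ | 0 < N ∧ HasMetricMarkovCotype X p N}

/-- The nonlinear spectral gap quantity `γ₊(A, d_X^p)`. -/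
def gammaPlus (X : Type*) [MetricSpace X] {n : ℕ} (A : Matrix (Fin n) (Fin n) ℝ)
    (p : ℝ) : ℝ≥0∞ :=
  sInf {g : ℝ≥0∞ | ∀ x y : Fin n → X,
    ENNReal.ofReal (((n : ℝ) ^ 2)⁻¹ * ∑ i, ∑ j, dist (x i) (y j) ^ p) ≤
      (g / (n : ℝ≥0∞)) * ENNReal.ofReal (∑ i, ∑ j, A i j * dist (x i) (y j) ^ p)}

/-- The metric of `L_p^n(X)`. -/
def dLpn {X : Type*} [MetricSpace X] (p : ℝ) {n : ℕ} (f g : Fin n → X) : ℝ :=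
  ((n : ℝ)⁻¹ * ∑ i, dist (f i) (g i) ^ p) ^ p⁻¹

/-- The barycenter `B(f) = B((1/n) ∑ δ_{f(i)})` of `f : Fin n → X`. -/
def baryFun {X : Type*} [MetricSpace X] (bary : FinProb X → X) {n : ℕ} (hn : 0 < n)
    (f : Fin n → X) : X :=
  bary (FinProb.mixN (fun _ : Fin n => 1) f (fun _ => zero_le_one)
    (by
      simp only [Finset.sum_const, Finset.card_univ, Fintype.card_fin, nsmul_eq_mul, mul_one]
      exact_mod_cast hn))

/-- The nonlinear action `(A ⊗ I_X^n)(f)(i) = B(∑_j a_{ij} δ_{f(j)})`. -/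
def matAct {X : Type*} [MetricSpace X] (bary : FinProb X → X) {n : ℕ}
    (A : Matrix (Fin n) (Fin n) ℝ) (hA : IsStochastic A) (f : Fin n → X) : Fin n → X :=
  fun i => bary (FinProb.mix (fun j => A i j) f (fun j => hA.1 i j) (hA.2 i))

/-- The quantity `λ_p(T)`. -/
def lambdaP {X : Type*} [MetricSpace X] (p : ℝ) {n : ℕ} (hn : 0 < n)
    (bary : FinProb X → X) (T : (Fin n → X) → (Fin n → X)) : ℝ≥0∞ :=
  sInf {l : ℝ≥0∞ | ∀ f : Fin n → X,
    ENNReal.ofReal (dLpn p (T f) (fun _ => baryFun bary hn (T f))) ≤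
      l * ENNReal.ofReal (dLpn p f (fun _ => baryFun bary hn f))}

/-- A finite σ-algebra on a finite set `Ω`, described by its atoms. -/
structure FinPartition (Ω : Type*) [Fintype Ω] where
  atom : Ω → Finset Ω
  mem_atom : ∀ ω, ω ∈ atom ω
  atom_eq : ∀ ω ω', ω' ∈ atom ω → atom ω' = atom ω

/-- The conditional barycenter `B(Z | F)`. -/
def condBary {Ω X : Type*} [Fintype Ω] (bary : FinProb X → X)
    (μ : Ω → ℝ) (hμ : ∀ ω, 0 < μ ω) (F : FinPartition Ω) (Z : Ω → X) : Ω → X :=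
  fun ω => bary (FinProb.mixN (fun a : {a // a ∈ F.atom ω} => μ a) (fun a => Z a)
    (fun a => (hμ a).le)
    (Finset.sum_pos (fun a _ => hμ a) ⟨⟨ω, F.mem_atom ω⟩, Finset.mem_univ _⟩))



lemma exp_mix' {ι X : Type*} [Fintype ι] (w : ι → ℝ) (Z : ι → X) (hw : ∀ i, 0 ≤ w i)
    (h1 : ∑ i, w i = 1) (F : X → ℝ) :
    (FinProb.mix w Z hw h1).exp F = ∑ i, w i * F (Z i) := by
  show ((∑ i, Finsupp.single (Z i) (w i)).sum fun x r => r * F x) = _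
  rw [← Finsupp.sum_finset_sum_index (fun a => zero_mul (F a))
    (fun a b₁ b₂ => add_mul b₁ b₂ (F a))]
  exact Finset.sum_congr rfl fun i _ => Finsupp.sum_single_index (zero_mul _)

theorem statement15 (p K : ℝ) (hp : 1 ≤ p) (hK : 1 ≤ K) (n : ℕ) (hn : 0 < n)
    (X : Type*) [MetricSpace X] (bary : FinProb X → X)
    (hBary : IsBarycenterMap bary) (hP : IsPBarycentric p K bary)
    (A : Matrix (Fin n) (Fin n) ℝ) (hA : IsStochastic A) (hsymm : A.IsSymm)
    (hγ : gammaPlus X A p ≠ ⊤) (f : Fin n → X) :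
    dLpn p (matAct bary A hA f) (fun _ => baryFun bary hn f) ≤
      ((K ^ (2 * p) * (gammaPlus X A p).toReal - 1) /
        (K ^ (2 * p) * (gammaPlus X A p).toReal + K ^ p)) ^ p⁻¹ *
      dLpn p f (fun _ => baryFun bary hn f) := by
  have hppos : (0:ℝ) < p := lt_of_lt_of_le one_pos hp
  have hp0 : p ≠ 0 := hppos.ne'
  have hK0 : (0:ℝ) < K := lt_of_lt_of_le one_pos hK
  have hn' : (n:ℝ) ≠ 0 := Nat.cast_ne_zero.mpr hn.ne'
  have hnpos : (0:ℝ) < n := Nat.cast_pos.mpr hn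
  -- the gammaPlus infimum satisfies the defining inequality
  have hγmem : ∀ x y : Fin n → X,
      ENNReal.ofReal (((n : ℝ) ^ 2)⁻¹ * ∑ i, ∑ j, dist (x i) (y j) ^ p) ≤
        gammaPlus X A p / (n : ℝ≥0∞) *
          ENNReal.ofReal (∑ i, ∑ j, A i j * dist (x i) (y j) ^ p) := by
    intro x y
    set S := {g : ℝ≥0∞ | ∀ u v : Fin n → X,
        ENNReal.ofReal (((n : ℝ) ^ 2)⁻¹ * ∑ i, ∑ j, dist (u i) (v j) ^ p) ≤
          g / (n : ℝ≥0∞) * ENNReal.ofReal (∑ i, ∑ j, A i j * dist (u i) (v j) ^ p)}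
      with hSdef
    have hge : gammaPlus X A p = sInf S := rfl
    have hSne : S.Nonempty := by
      by_contra h
      rw [Set.not_nonempty_iff_eq_empty] at h
      exact hγ (by rw [hge, h, sInf_empty])
    have : Nonempty S := hSne.to_subtype
    set c := ENNReal.ofReal (∑ i, ∑ j, A i j * dist (x i) (y j) ^ p) with hc
    set d := (n : ℝ≥0∞)⁻¹ * c with hd
    have hdt : d ≠ ⊤ := by
      rw [hd]
      exact ENNReal.mul_ne_top (ENNReal.inv_ne_top.mpr
        (by exact_mod_cast Nat.cast_ne_zero.mpr hn.ne')) ENNReal.ofReal_ne_top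
    calc ENNReal.ofReal (((n : ℝ) ^ 2)⁻¹ * ∑ i, ∑ j, dist (x i) (y j) ^ p)
        ≤ ⨅ gg : S, (gg : ℝ≥0∞) * d := by
          refine le_iInf fun gg => ?_
          have h2 := gg.2 x y
          rwa [← hc, div_eq_mul_inv, mul_assoc, ← hd] at h2
      _ = (⨅ gg : S, (gg : ℝ≥0∞)) * d := (ENNReal.iInf_mul (fun h => absurd h hdt)).symm
      _ = sInf S * d := by rw [sInf_eq_iInf']
      _ = gammaPlus X A p / (n : ℝ≥0∞) * c := by
          rw [← hge, hd, div_eq_mul_inv, mul_assoc]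
  have hγreal : ∀ x y : Fin n → X,
      ((n : ℝ) ^ 2)⁻¹ * ∑ i, ∑ j, dist (x i) (y j) ^ p ≤
        (gammaPlus X A p).toReal / n * ∑ i, ∑ j, A i j * dist (x i) (y j) ^ p := by
    intro x y
    have h := hγmem x y
    have hL0 : 0 ≤ ((n : ℝ) ^ 2)⁻¹ * ∑ i, ∑ j, dist (x i) (y j) ^ p := by
      refine mul_nonneg (by positivity) (Finset.sum_nonneg fun i _ =>
        Finset.sum_nonneg fun j _ => Real.rpow_nonneg dist_nonneg p)
    have hR0 : 0 ≤ ∑ i, ∑ j, A i j * dist (x i) (y j) ^ p :=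
      Finset.sum_nonneg fun i _ => Finset.sum_nonneg fun j _ =>
        mul_nonneg (hA.1 i j) (Real.rpow_nonneg dist_nonneg p)
    have hfin : gammaPlus X A p / (n : ℝ≥0∞) *
        ENNReal.ofReal (∑ i, ∑ j, A i j * dist (x i) (y j) ^ p) ≠ ⊤ :=
      ENNReal.mul_ne_top (ENNReal.div_lt_top hγ (by exact_mod_cast hn.ne')).ne
        ENNReal.ofReal_ne_top
    have h2 := ENNReal.toReal_mono hfin h
    rwa [ENNReal.toReal_ofReal hL0, ENNReal.toReal_mul, ENNReal.toReal_ofReal hR0,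
      ENNReal.toReal_div, ENNReal.toReal_natCast] at h2
  set g : ℝ := (gammaPlus X A p).toReal with hgdef
  have hg0 : 0 ≤ g := ENNReal.toReal_nonneg
  set b := baryFun bary hn f with hbdef
  set y := matAct bary A hA f with hydef
  -- barycentric inequality (a)
  have ha : ∀ i, dist (y i) b ^ p + K ^ (-p) * ∑ j, A i j * dist (y i) (f j) ^ p ≤
      ∑ j, A i j * dist (f j) b ^ p := by
    intro i
    have h := hP b (FinProb.mix (fun j => A i j) f (hA.1 i) (hA.2 i))
    rw [exp_mix', exp_mix'] at h
    have hyμ : bary (FinProb.mix (fun j => A i j) f (hA.1 i) (hA.2 i)) = y i := by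
      rw [hydef]; rfl
    rw [hyμ] at h
    simp only [dist_comm b] at h
    exact h
  -- barycentric inequality (b)
  have hsum1 : (0:ℝ) < ∑ _i : Fin n, (1:ℝ) := by
    simp only [Finset.sum_const, Finset.card_univ, Fintype.card_fin, nsmul_eq_mul, mul_one]
    exact_mod_cast hn
  have hexp : ∀ F : X → ℝ,
      (FinProb.mixN (fun _ : Fin n => 1) f (fun _ => zero_le_one) hsum1).exp F =
        (n:ℝ)⁻¹ * ∑ j, F (f j) := by
    intro F
    rw [FinProb.mixN, exp_mix', ← Finset.mul_sum]
    simp [Finset.card_univ]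
  have hbμ : bary (FinProb.mixN (fun _ : Fin n => 1) f (fun _ => zero_le_one) hsum1) = b := by
    rw [hbdef]; rfl
  have hb2 : ∀ i, dist (y i) b ^ p + K ^ (-p) * ((n:ℝ)⁻¹ * ∑ j, dist b (f j) ^ p) ≤
      (n:ℝ)⁻¹ * ∑ j, dist (y i) (f j) ^ p := by
    intro i
    have h := hP (y i) (FinProb.mixN (fun _ : Fin n => 1) f (fun _ => zero_le_one) hsum1)
    rw [hexp, hexp, hbμ] at h
    exact h
  -- abbreviations for the key sums
  set SL := ∑ i, dist (y i) b ^ p with hSL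
  set SE := ∑ i, dist (f i) b ^ p with hSE
  set SS := ∑ i, ∑ j, A i j * dist (y i) (f j) ^ p with hSS
  set SD := ∑ i, ∑ j, dist (y i) (f j) ^ p with hSD
  have hSL0 : 0 ≤ SL := Finset.sum_nonneg fun i _ => Real.rpow_nonneg dist_nonneg p
  have hSE0 : 0 ≤ SE := Finset.sum_nonneg fun i _ => Real.rpow_nonneg dist_nonneg p
  have hSS0 : 0 ≤ SS := Finset.sum_nonneg fun i _ => Finset.sum_nonneg fun j _ =>
    mul_nonneg (hA.1 i j) (Real.rpow_nonneg dist_nonneg p)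
  -- summed inequality (a):  SL + K^(-p) * SS ≤ SE
  have h1 : SL + K ^ (-p) * SS ≤ SE := by
    have h := Finset.sum_le_sum (fun i (_ : i ∈ Finset.univ) => ha i)
    rw [Finset.sum_add_distrib, ← Finset.mul_sum] at h
    have hcol : ∑ i, ∑ j, A i j * dist (f j) b ^ p = SE := by
      rw [Finset.sum_comm]
      refine Finset.sum_congr rfl fun j _ => ?_
      rw [← Finset.sum_mul]
      have hone : ∑ i, A i j = 1 := by
        rw [Finset.sum_congr rfl fun i (_ : i ∈ Finset.univ) => (hsymm.apply i j).symm]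
        exact hA.2 j
      rw [hone, one_mul]
    rwa [hcol] at h
  -- summed inequality (b) + spectral gap:  SL + K^(-p) * SE ≤ g * SS
  have h2 : SL + K ^ (-p) * SE ≤ g * SS := by
    have h := Finset.sum_le_sum (fun i (_ : i ∈ Finset.univ) => hb2 i)
    rw [Finset.sum_add_distrib, Finset.sum_const, Finset.card_univ, Fintype.card_fin,
      nsmul_eq_mul, ← Finset.mul_sum] at h
    have eT : ∑ j, dist b (f j) ^ p = SE := by
      rw [hSE]
      exact Finset.sum_congr rfl fun j _ => by rw [dist_comm]
    have e4 : (n:ℝ) * (K ^ (-p) * ((n:ℝ)⁻¹ * ∑ j, dist b (f j) ^ p)) =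
        K ^ (-p) * SE := by
      rw [eT, show (n:ℝ) * (K ^ (-p) * ((n:ℝ)⁻¹ * SE)) =
        ((n:ℝ) * (n:ℝ)⁻¹) * (K ^ (-p) * SE) from by ring, mul_inv_cancel₀ hn', one_mul]
    rw [e4] at h
    have hg' := hγreal y f
    have e2 : (n:ℝ) * (((n:ℝ)^2)⁻¹ * SD) = (n:ℝ)⁻¹ * SD := by
      field_simp
    have e3 : (n:ℝ) * (g / n * SS) = g * SS := by field_simp
    have h5 : (n:ℝ)⁻¹ * SD ≤ g * SS := by
      calc (n:ℝ)⁻¹ * SD = (n:ℝ) * (((n:ℝ)^2)⁻¹ * SD) := e2.symm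
        _ ≤ (n:ℝ) * (g / n * SS) := by
            exact mul_le_mul_of_nonneg_left hg' (le_of_lt hnpos)
        _ = g * SS := e3
    linarith
  -- now pure real arithmetic
  set q := K ^ p with hq
  have hq0 : (0:ℝ) < q := Real.rpow_pos_of_pos hK0 p
  have hq1 : (1:ℝ) ≤ q := by
    have h := Real.rpow_le_rpow_of_exponent_le hK (le_of_lt hppos : (0:ℝ) ≤ p)
    rwa [Real.rpow_zero] at h
  have hKneg : K ^ (-p) = q⁻¹ := by rw [Real.rpow_neg hK0.le, hq]
  have h2p : K ^ (2 * p) = q * q := by rw [two_mul, Real.rpow_add hK0, hq]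
  rw [hKneg] at h1 h2
  -- clear the inverses
  have h1' : q * SL + SS ≤ q * SE := by
    have h := mul_le_mul_of_nonneg_left h1 hq0.le
    rwa [mul_add, ← mul_assoc, mul_inv_cancel₀ hq0.ne', one_mul] at h
  have h2' : q * SL + SE ≤ q * (g * SS) := by
    have h := mul_le_mul_of_nonneg_left h2 hq0.le
    rwa [mul_add, ← mul_assoc, mul_inv_cancel₀ hq0.ne', one_mul] at h
  -- unfold dLpn in the goal
  simp only [dLpn, h2p]
  rw [← hSL, ← hSE]
  by_cases hE0 : SE = 0
  · have hL0 : SL = 0 := by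
      have : K ^ p⁻¹ = K ^ p⁻¹ := rfl
      nlinarith [mul_nonneg (inv_nonneg.mpr hq0.le) hSS0]
    rw [hE0, hL0, mul_zero, Real.zero_rpow (inv_ne_zero hp0), mul_zero]
  · have hEpos : 0 < SE := lt_of_le_of_ne hSE0 (Ne.symm hE0)
    -- g ≥ 1
    have hg1 : (1:ℝ) ≤ g := by
      have hex : ∃ i, 0 < dist (f i) b ^ p := by
        by_contra hcon
        push_neg at hcon
        have : SE ≤ 0 := Finset.sum_nonpos fun i _ => hcon i
        linarith
      obtain ⟨i, hi⟩ := hex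
      have h := hγreal (fun _ => f i) (fun _ => b)
      have eL : ∑ _i' : Fin n, ∑ _j : Fin n, dist (f i) b ^ p =
          (n:ℝ)^2 * dist (f i) b ^ p := by
        simp [Finset.sum_const, Finset.card_univ, mul_assoc]
        ring
      have eR : ∑ i' : Fin n, ∑ j : Fin n, A i' j * dist (f i) b ^ p =
          (n:ℝ) * dist (f i) b ^ p := by
        have : ∀ i' : Fin n, ∑ j, A i' j * dist (f i) b ^ p = dist (f i) b ^ p := by
          intro i'
          rw [← Finset.sum_mul, hA.2 i', one_mul]
        rw [Finset.sum_congr rfl fun i' _ => this i']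
        simp [Finset.card_univ]
      rw [eL, eR] at h
      have hn2 : ((n:ℝ)^2)⁻¹ * ((n:ℝ)^2 * dist (f i) b ^ p) = dist (f i) b ^ p := by
        field_simp
      have hn3 : g / n * ((n:ℝ) * dist (f i) b ^ p) = g * dist (f i) b ^ p := by
        field_simp
      rw [hn2, hn3] at h
      refine le_of_mul_le_mul_right ?_ hi
      calc 1 * dist (f i) b ^ p = dist (f i) b ^ p := one_mul _
        _ ≤ g * dist (f i) b ^ p := h
    have hnum0 : 0 ≤ q * q * g - 1 := by nlinarith
    have hden0 : 0 < q * q * g + q := by nlinarith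
    have key : SL ≤ (q * q * g - 1) / (q * q * g + q) * SE := by
      rw [div_mul_eq_mul_div, le_div_iff₀ hden0]
      linarith [mul_le_mul_of_nonneg_left h1' (mul_nonneg hg0 hq0.le), h2']
    have hinv : (0:ℝ) ≤ (n:ℝ)⁻¹ := inv_nonneg.mpr hnpos.le
    have key2 : (n:ℝ)⁻¹ * SL ≤ (q * q * g - 1) / (q * q * g + q) * ((n:ℝ)⁻¹ * SE) := by
      have := mul_le_mul_of_nonneg_left key hinv
      calc (n:ℝ)⁻¹ * SL ≤ (n:ℝ)⁻¹ * ((q * q * g - 1) / (q * q * g + q) * SE) := this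
        _ = (q * q * g - 1) / (q * q * g + q) * ((n:ℝ)⁻¹ * SE) := by ring
    have hr0 : 0 ≤ (q * q * g - 1) / (q * q * g + q) := div_nonneg hnum0 hden0.le
    calc ((n:ℝ)⁻¹ * SL) ^ p⁻¹
        ≤ ((q * q * g - 1) / (q * q * g + q) * ((n:ℝ)⁻¹ * SE)) ^ p⁻¹ := by
          exact Real.rpow_le_rpow (mul_nonneg hinv hSL0) key2 (inv_nonneg.mpr hppos.le)
      _ = ((q * q * g - 1) / (q * q * g + q)) ^ p⁻¹ * ((n:ℝ)⁻¹ * SE) ^ p⁻¹ :=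
          Real.mul_rpow hr0 (mul_nonneg hinv hSE0)


end
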